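/- Fix a dense set T ⊆ ⋃_n ℕ^n × ℕ^n (for all (u₀,u₁) there is (t₀,t₁) ∈ T with u_i ⊆ t_i) and let H₀^ω be the directed graph on X_α with edges (t₀⌢0⌢x, t₁⌢1⌢x) for (t₀,t₁) ∈ T and x ∈ ℕ^ℕ (restricted to X_α). Let R be a total quasi-order on X_α containing H₀^ω which is Baire measurable. Then some equivalence class of the relation x ≡_R y iff (x R y and y R x) is comeager in X_α. -/

import Mathlib

open Set

/-- The concatenation `s⌢i⌢x ∈ ℕ^ℕ` of a finite sequence `s`, a single term `i`, and `x ∈ ℕ^ℕ`. -/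
def extSeq (s : List ℕ) (i : ℕ) (x : ℕ → ℕ) : ℕ → ℕ := fun n =>
  if h : n < s.length then s.get ⟨n, h⟩ else if n = s.length then i else x (n - s.length - 1)

/-- The dense `Gδ` set `X_α = {x ∈ ℕ^ℕ : ∀n ∃m ≥ n, x↾m ∈ α(m)^m}`. -/
def Xalpha (α : ℕ → ℕ) : Set (ℕ → ℕ) := {x | ∀ n, ∃ m ≥ n, ∀ i < m, x i < α m}

/-! ### Cylinder sets in Baire space -/

/-- The basic clopen cylinder of functions agreeing with `x` on `[0, n)`. -/
def cylP (x : ℕ → ℕ) (n : ℕ) : Set (ℕ → ℕ) := {y | ∀ i < n, y i = x i}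

lemma cylP_isOpen (x : ℕ → ℕ) (n : ℕ) : IsOpen (cylP x n) := by
  have : cylP x n = Set.pi (Set.Iio n) (fun i => {x i}) := by
    ext y; simp [cylP, Set.pi]
  rw [this]
  exact isOpen_set_pi (Set.finite_Iio n) (fun i _ => isOpen_discrete _)

lemma self_mem_cylP (x : ℕ → ℕ) (n : ℕ) : x ∈ cylP x n := fun _ _ => rfl

lemma exists_cylP_subset {U : Set (ℕ → ℕ)} (hU : IsOpen U) {x : ℕ → ℕ} (hx : x ∈ U) :
    ∃ n, cylP x n ⊆ U := by
  obtain ⟨I, u, hIu, hsub⟩ := isOpen_pi_iff.1 hU x hx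
  refine ⟨(I.sup id) + 1, fun y hy => hsub fun a ha => ?_⟩
  have : a < I.sup id + 1 := Nat.lt_succ_of_le (Finset.le_sup (f := id) ha)
  rw [hy a this]
  exact (hIu a ha).2

lemma isOpen_of_cylP {U : Set (ℕ → ℕ)} (h : ∀ x ∈ U, ∃ n, cylP x n ⊆ U) : IsOpen U := by
  have : U = ⋃ x : U, cylP x.1 (h x.1 x.2).choose := by
    apply Set.Subset.antisymm
    · intro x hx
      exact Set.mem_iUnion.2 ⟨⟨x, hx⟩, self_mem_cylP _ _⟩
    · intro y hy
      obtain ⟨x, hx⟩ := Set.mem_iUnion.1 hy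
      exact (h x.1 x.2).choose_spec hx
  rw [this]
  exact isOpen_iUnion fun x => cylP_isOpen _ _

/-! ### Properties of `extSeq` -/

lemma extSeq_continuous (s : List ℕ) (i : ℕ) : Continuous (extSeq s i) := by
  refine continuous_pi fun n => ?_
  unfold extSeq
  by_cases h : n < s.length
  · simpa [h] using continuous_const
  · by_cases h' : n = s.length
    · simpa [h, h'] using continuous_const
    · simpa [h, h'] using continuous_apply (n - s.length - 1)

lemma extSeq_eq_of_lt (s : List ℕ) (i : ℕ) (x : ℕ → ℕ) {n : ℕ} (h : n < s.length) :
    extSeq s i x n = s.get ⟨n, h⟩ := by simp [extSeq, h]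

lemma extSeq_eq_of_eq (s : List ℕ) (i : ℕ) (x : ℕ → ℕ) :
    extSeq s i x s.length = i := by simp [extSeq]

lemma extSeq_eq_of_gt (s : List ℕ) (i : ℕ) (x : ℕ → ℕ) {n : ℕ} (h : s.length < n) :
    extSeq s i x n = x (n - s.length - 1) := by
  have h1 : ¬ n < s.length := by omega
  have h2 : ¬ n = s.length := by omega
  simp [extSeq, h1, h2]

lemma isOpenMap_extSeq (s : List ℕ) (i : ℕ) : IsOpenMap (extSeq s i) := by
  intro O hO
  apply isOpen_of_cylP
  rintro z ⟨x, hxO, rfl⟩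
  obtain ⟨n, hn⟩ := exists_cylP_subset hO hxO
  refine ⟨n + s.length + 1, fun y hy => ?_⟩
  set x' : ℕ → ℕ := fun m => y (m + s.length + 1) with hx'
  have hagree : ∀ j, j ≤ s.length → y j = extSeq s i x j := by
    intro j hj
    exact hy j (by omega)
  have hext : extSeq s i x' = y := by
    funext m
    rcases lt_trichotomy m s.length with hm | hm | hm
    · rw [extSeq_eq_of_lt s i x' hm, hagree m (le_of_lt hm), extSeq_eq_of_lt s i x hm]
    · subst hm
      rw [extSeq_eq_of_eq, hagree _ le_rfl, extSeq_eq_of_eq]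
    · rw [extSeq_eq_of_gt s i x' hm, hx']
      simp only
      congr 1
      omega
  have hx'O : x' ∈ O := by
    apply hn
    intro j hj
    have h1 : y (j + s.length + 1) = extSeq s i x (j + s.length + 1) := hy _ (by omega)
    have h2 : extSeq s i x (j + s.length + 1) = x j := by
      rw [extSeq_eq_of_gt s i x (by omega)]
      congr 1
      omega
    simpa [hx', h1] using h2
  exact ⟨x', hx'O, hext⟩

lemma extSeq_preimage_residual (s : List ℕ) (i : ℕ) {A : Set (ℕ → ℕ)}
    (hA : A ∈ residual (ℕ → ℕ)) : (extSeq s i) ⁻¹' A ∈ residual (ℕ → ℕ) :=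
  tendsto_residual_of_isOpenMap (extSeq_continuous s i) (isOpenMap_extSeq s i) hA

/-! ### Kuratowski–Ulam (the easy direction) -/

lemma ku {X Y : Type*} [TopologicalSpace X] [TopologicalSpace Y]
    [SecondCountableTopology Y]
    {W : Set (X × Y)} (hW : W ∈ residual (X × Y)) :
    {a : X | {b : Y | (a, b) ∈ W} ∈ residual Y} ∈ residual X := by
  obtain ⟨S, hSo, hSd, hSc, hSsub⟩ := mem_residual_iff.1 hW
  obtain ⟨B, hBc, hBne, hB⟩ := TopologicalSpace.exists_countable_basis Y
  -- for each dense open s, the set of a with dense section is residual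
  have key : ∀ s ∈ S, {a : X | Dense {b : Y | (a, b) ∈ s}} ∈ residual X := by
    intro s hs
    have hsub : (⋂ V ∈ {V ∈ B | V.Nonempty}, {a : X | ∃ b ∈ V, (a, b) ∈ s}) ⊆
        {a : X | Dense {b : Y | (a, b) ∈ s}} := by
      intro a ha
      simp only [Set.mem_iInter, Set.mem_setOf_eq] at ha
      refine Set.mem_setOf_eq ▸ (hB.dense_iff.2 fun V hV hVne => ?_)
      obtain ⟨b, hbV, hbs⟩ := ha V ⟨hV, hVne⟩
      exact ⟨b, hbV, hbs⟩
    refine Filter.mem_of_superset ?_ hsub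
    refine (countable_bInter_mem (hBc.mono (Set.sep_subset _ _))).2 ?_
    rintro V ⟨hVB, hVne⟩
    apply residual_of_dense_open
    · have : {a : X | ∃ b ∈ V, (a, b) ∈ s} = Prod.fst '' (s ∩ (Set.univ ×ˢ V)) := by
        ext a
        constructor
        · rintro ⟨b, hbV, hbs⟩; exact ⟨(a, b), ⟨hbs, trivial, hbV⟩, rfl⟩
        · rintro ⟨p, ⟨hps, -, hpV⟩, rfl⟩; exact ⟨p.2, hpV, hps⟩
      rw [this]
      exact isOpenMap_fst _ ((hSo s hs).inter (isOpen_univ.prod (hB.isOpen hVB)))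
    · rw [dense_iff_inter_open]
      intro A hA hAne
      have : ((A ×ˢ V) ∩ s).Nonempty :=
        (hSd s hs).inter_open_nonempty _ (hA.prod (hB.isOpen hVB))
          (hAne.prod hVne)
      obtain ⟨p, ⟨hpA, hpV⟩, hps⟩ := this
      exact ⟨p.1, hpA, p.2, hpV, hps⟩
  have hmem : (⋂ s ∈ S, {a : X | Dense {b : Y | (a, b) ∈ s}}) ∈ residual X :=
    (countable_bInter_mem hSc).2 key
  refine Filter.mem_of_superset hmem ?_
  intro a ha
  simp only [Set.mem_iInter, Set.mem_setOf_eq] at ha ⊢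
  rw [mem_residual_iff]
  refine ⟨(fun s => {b : Y | (a, b) ∈ s}) '' S, ?_, ?_, hSc.image _, ?_⟩
  · rintro t ⟨s, hs, rfl⟩
    exact (hSo s hs).preimage (Continuous.prodMk_right a)
  · rintro t ⟨s, hs, rfl⟩
    exact ha s hs
  · intro b hb
    apply hSsub
    intro s hs
    exact hb _ ⟨s, hs, rfl⟩

/-! ### `X_α` is comeager -/

lemma xalpha_residual {α : ℕ → ℕ} (hα : StrictMono α) : Xalpha α ∈ residual (ℕ → ℕ) := by
  have : Xalpha α = ⋂ n, {x : ℕ → ℕ | ∃ m, n ≤ m ∧ ∀ i < m, x i < α m} := by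
    ext x; simp [Xalpha]
  rw [this]
  refine countable_iInter_mem.2 fun n => residual_of_dense_open ?_ ?_
  · apply isOpen_of_cylP
    rintro x ⟨m, hnm, hm⟩
    exact ⟨m, fun y hy => ⟨m, hnm, fun i hi => (hy i hi).symm ▸ hm i hi⟩⟩
  · rw [dense_iff_inter_open]
    intro U hU ⟨x, hx⟩
    obtain ⟨n₀, hn₀⟩ := exists_cylP_subset hU hx
    set B := (Finset.range n₀).sup x + 1 with hB
    set m := max n (max n₀ B) with hm
    refine ⟨fun i => if i < n₀ then x i else 0, hn₀ (fun i hi => by simp [hi]), m, le_max_left _ _, ?_⟩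
    intro i hi
    have hmα : m ≤ α m := hα.le_apply
    by_cases h : i < n₀
    · simp only [h, if_pos]
      have : x i < B := Nat.lt_succ_of_le (Finset.le_sup (Finset.mem_range.2 h))
      calc x i < B := this
        _ ≤ m := le_trans (le_max_right _ _) (le_max_right _ _)
        _ ≤ α m := hmα
    · simp only [h, if_neg, if_false]
      have : 0 < B := Nat.succ_pos _
      have : 0 < m := lt_of_lt_of_le this (le_trans (le_max_right _ _) (le_max_right _ _))
      exact lt_of_lt_of_le this hmα

/-! ### Main theorem -/

theorem stmt10 (α : ℕ → ℕ) (hα : StrictMono α)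
    (T : Set (List ℕ × List ℕ))
    (hTlen : ∀ t ∈ T, t.1.length = t.2.length)
    (hTdense : ∀ u₀ u₁ : List ℕ, ∃ t ∈ T, u₀ <+: t.1 ∧ u₁ <+: t.2)
    (R : (ℕ → ℕ) → (ℕ → ℕ) → Prop)
    (hrefl : ∀ x ∈ Xalpha α, R x x)
    (htrans : ∀ x y z, x ∈ Xalpha α → y ∈ Xalpha α → z ∈ Xalpha α →
      R x y → R y z → R x z)
    (htotal : ∀ x y, x ∈ Xalpha α → y ∈ Xalpha α → R x y ∨ R y x)
    (hH0 : ∀ t ∈ T, ∀ x : ℕ → ℕ, extSeq t.1 0 x ∈ Xalpha α → extSeq t.2 1 x ∈ Xalpha α →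
      R (extSeq t.1 0 x) (extSeq t.2 1 x))
    (hBaire : BaireMeasurableSet {p : (ℕ → ℕ) × (ℕ → ℕ) | R p.1 p.2}) :
    ∃ x₀ ∈ Xalpha α, {y | y ∈ Xalpha α ∧ R x₀ y ∧ R y x₀} ∈ residual (ℕ → ℕ) := by
  classical
  obtain ⟨U, hUo, hRU⟩ := hBaire.residualEq_isOpen
  have hXa : Xalpha α ∈ residual (ℕ → ℕ) := xalpha_residual hα
  -- the set where R and U agree
  have hE : {p : (ℕ → ℕ) × (ℕ → ℕ) | R p.1 p.2 ↔ p ∈ U} ∈ residual _ := by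
    have := hRU.mono (fun p hp => iff_of_eq hp)
    exact this
  set E : Set ((ℕ → ℕ) × (ℕ → ℕ)) := {p | R p.1 p.2 ↔ p ∈ U} with hEdef
  -- swap of E is residual
  have hE' : {p : (ℕ → ℕ) × (ℕ → ℕ) | R p.2 p.1 ↔ (p.2, p.1) ∈ U} ∈ residual _ := by
    have h1 : Prod.swap ⁻¹' E ∈ residual ((ℕ → ℕ) × (ℕ → ℕ)) :=
      tendsto_residual_of_isOpenMap continuous_swap
        (Homeomorph.prodComm (ℕ → ℕ) (ℕ → ℕ)).isOpenMap hE
    exact h1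
  -- main claim : R is comeager
  have hmain : {p : (ℕ → ℕ) × (ℕ → ℕ) | R p.1 p.2} ∈ residual _ := by
    by_cases hdU : Dense U
    · exact Filter.mem_of_superset (Filter.inter_mem (residual_of_dense_open hUo hdU) hE)
        (fun p ⟨h1, h2⟩ => h2.mpr h1)
    · exfalso
      -- find a box disjoint from U
      rw [dense_iff_inter_open] at hdU
      push_neg at hdU
      obtain ⟨V, hVo, hVne, hVU⟩ := hdU
      obtain ⟨p, hp⟩ := hVne
      obtain ⟨u, v, huo, hvo, hpu, hpv, huv⟩ := isOpen_prod_iff.1 hVo p.1 p.2 hp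
      obtain ⟨n₀, hn₀⟩ := exists_cylP_subset huo hpu
      obtain ⟨n₁, hn₁⟩ := exists_cylP_subset hvo hpv
      have hdisj : ∀ a b, a ∈ cylP p.1 n₀ → b ∈ cylP p.2 n₁ → (a, b) ∉ U := by
        intro a b ha hb hU
        have : ((a, b) : _ × _) ∈ V ∩ U := ⟨huv ⟨hn₀ ha, hn₁ hb⟩, hU⟩
        rw [hVU] at this
        exact this
      -- genericity sets
      have hKU1 := ku hE
      have hKU2 := ku hE'
      set G : Set (ℕ → ℕ) := {a | {b | (a, b) ∈ E} ∈ residual (ℕ → ℕ)} ∩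
        {a | {b | R b a ↔ (b, a) ∈ U} ∈ residual (ℕ → ℕ)} ∩ Xalpha α with hGdef
      have hG : G ∈ residual (ℕ → ℕ) :=
        Filter.inter_mem (Filter.inter_mem hKU1 hKU2) hXa
      -- Case A : no generic point of the first cylinder has a point of U above it
      have caseA : ∀ a ∈ G, a ∈ cylP p.1 n₀ → ∀ b, (a, b) ∉ U := by
        rintro a ⟨⟨ha1, ha2⟩, haC⟩ haN b hbU
        have hsecO : IsOpen {y : ℕ → ℕ | (a, y) ∈ U} := hUo.preimage (Continuous.prodMk_right a)
        obtain ⟨nw, hnw⟩ := exists_cylP_subset hsecO (show b ∈ _ from hbU)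
        obtain ⟨t, htT, hw, hu1⟩ := hTdense ((List.range nw).map b) ((List.range n₁).map p.2)
        -- a generic x
        have hx : ((extSeq t.1 0) ⁻¹' {y | (a, y) ∈ E} ∩ (extSeq t.2 1) ⁻¹' {y | (a, y) ∈ E}
            ∩ ((extSeq t.1 0) ⁻¹' Xalpha α ∩ (extSeq t.2 1) ⁻¹' Xalpha α)) ∈
            residual (ℕ → ℕ) := by
          refine Filter.inter_mem (Filter.inter_mem ?_ ?_) (Filter.inter_mem ?_ ?_) <;>
            [exact extSeq_preimage_residual _ _ ha1;
             exact extSeq_preimage_residual _ _ ha1;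
             exact extSeq_preimage_residual _ _ hXa;
             exact extSeq_preimage_residual _ _ hXa]
        obtain ⟨x, ⟨hxE0, hxE1⟩, hxX0, hxX1⟩ :=
          (dense_of_mem_residual hx).nonempty
        set e₀ := extSeq t.1 0 x with he₀
        set e₁ := extSeq t.2 1 x with he₁
        -- e₀ is in the cylinder of b of length nw
        have hlen0 : nw ≤ t.1.length := by
          have := hw.length_le; simpa using this
        have he₀w : e₀ ∈ cylP b nw := by
          intro j hj
          have hjlen : j < t.1.length := lt_of_lt_of_le hj hlen0
          rw [he₀, extSeq_eq_of_lt _ _ _ hjlen]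
          have : t.1.get ⟨j, hjlen⟩ = ((List.range nw).map b).get ⟨j, by simpa using hj⟩ :=
            by simp only [List.get_eq_getElem]; exact (List.IsPrefix.getElem hw _).symm
          rw [this]
          simp
        have hlen1 : n₁ ≤ t.2.length := by
          have := hu1.length_le; simpa using this
        have he₁v : e₁ ∈ cylP p.2 n₁ := by
          intro j hj
          have hjlen : j < t.2.length := lt_of_lt_of_le hj hlen1
          rw [he₁, extSeq_eq_of_lt _ _ _ hjlen]
          have : t.2.get ⟨j, hjlen⟩ = ((List.range n₁).map p.2).get ⟨j, by simpa using hj⟩ :=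
            by simp only [List.get_eq_getElem]; exact (List.IsPrefix.getElem hu1 _).symm
          rw [this]
          simp
        -- a R e₀
        have hae₀U : (a, e₀) ∈ U := hnw he₀w
        have hRae₀ : R a e₀ := hxE0.mpr hae₀U
        -- edge
        have hedge : R e₀ e₁ := hH0 t htT x hxX0 hxX1
        -- transitivity
        have hRae₁ : R a e₁ := htrans a e₀ e₁ haC hxX0 hxX1 hRae₀ hedge
        -- contradiction
        have : (a, e₁) ∈ U := hxE1.mp hRae₁
        exact hdisj a e₁ haN he₁v this
      -- Case B : two generic points in the cylinder are incomparable
      obtain ⟨a, haN, haG⟩ :=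
        (dense_of_mem_residual hG).inter_open_nonempty (cylP p.1 n₀) (cylP_isOpen _ _)
          ⟨p.1, self_mem_cylP _ _⟩
      obtain ⟨⟨ha1, ha2⟩, haC⟩ := haG
      have hres : (G ∩ ({z | (a, z) ∈ E} ∩ {z | R z a ↔ (z, a) ∈ U})) ∈ residual (ℕ → ℕ) :=
        Filter.inter_mem hG (Filter.inter_mem ha1 ha2)
      obtain ⟨a', ha'N, ha'G, ha'E, ha'E'⟩ :=
        (dense_of_mem_residual hres).inter_open_nonempty (cylP p.1 n₀) (cylP_isOpen _ _)
          ⟨p.1, self_mem_cylP _ _⟩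
      have hUa : ∀ b, (a, b) ∉ U := caseA a ⟨⟨ha1, ha2⟩, haC⟩ haN
      have hUa' : ∀ b, (a', b) ∉ U := caseA a' ha'G ha'N
      have hnot1 : ¬ R a a' := fun h => hUa a' (ha'E.mp h)
      have hnot2 : ¬ R a' a := fun h => hUa' a (ha'E'.mp h)
      rcases htotal a a' haC ha'G.2 with h | h
      · exact hnot1 h
      · exact hnot2 h
  -- conclude from comeagerness of R
  have hswap : {p : (ℕ → ℕ) × (ℕ → ℕ) | R p.2 p.1} ∈ residual _ :=
    tendsto_residual_of_isOpenMap continuous_swap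
      (Homeomorph.prodComm (ℕ → ℕ) (ℕ → ℕ)).isOpenMap hmain
  have h1 := ku hmain
  have h2 := ku hswap
  obtain ⟨x₀, ⟨hx1, hx2⟩, hx0⟩ :=
    (dense_of_mem_residual (Filter.inter_mem (Filter.inter_mem h1 h2) hXa)).nonempty
  refine ⟨x₀, hx0, ?_⟩
  have : ({b | R x₀ b} ∩ {b | R b x₀} ∩ Xalpha α) ∈ residual (ℕ → ℕ) :=
    Filter.inter_mem (Filter.inter_mem hx1 hx2) hXa
  exact Filter.mem_of_superset this (fun y ⟨⟨hy1, hy2⟩, hy3⟩ => ⟨hy3, hy1, hy2⟩)
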